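/- Let s : {0, 1, ..., n} → ℤ be a walk with s(0) = 0, |s(j+1) − s(j)| = 1, 0 ≤ s(j) ≤ L for all j, and s(n) = 0, with n ≥ 2. Remove the first up-step (first index where s increases) and the first down-step (first index where s decreases) from the step sequence. Then the resulting sequence of n − 2 steps, started at 0, again has all partial sums in [0, L] and final sum 0. -/

import Mathlib

/-- Removing the first up-step and the first down-step from a walk with ±1
steps, values in [0, L], start and end at 0, yields again a step sequence all
of whose partial sums lie in [0, L] and whose total sum is 0. -/
theorem stmt_15 (n L : ℕ) (s : ℕ → ℤ) (p q : ℕ)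
    (hn : 2 ≤ n) (h0 : s 0 = 0) (hend : s n = 0)
    (hstep : ∀ j < n, |s (j + 1) - s j| = 1)
    (hbound : ∀ j ≤ n, 0 ≤ s j ∧ s j ≤ (L : ℤ))
    (hp : p < n ∧ s (p + 1) - s p = 1 ∧ ∀ j < p, s (j + 1) - s j ≠ 1)
    (hq : q < n ∧ s (q + 1) - s q = -1 ∧ ∀ j < q, s (j + 1) - s j ≠ -1) :
    -- the remaining step sequence, obtained by deleting steps p and q
    (∀ m ≤ n - 2,
        0 ≤ ∑ j ∈ Finset.range m,
              (if j < min p q then s (j + 1) - s j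
               else if j < max p q - 1 then s (j + 2) - s (j + 1)
               else s (j + 3) - s (j + 2)) ∧
        ∑ j ∈ Finset.range m,
              (if j < min p q then s (j + 1) - s j
               else if j < max p q - 1 then s (j + 2) - s (j + 1)
               else s (j + 3) - s (j + 2)) ≤ (L : ℤ)) ∧
    ∑ j ∈ Finset.range (n - 2),
        (if j < min p q then s (j + 1) - s j
         else if j < max p q - 1 then s (j + 2) - s (j + 1)
         else s (j + 3) - s (j + 2)) = 0 := by
  obtain ⟨hpn, hpstep, hpfirst⟩ := hp
  obtain ⟨hqn, hqstep, hqfirst⟩ := hq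
  -- p = 0
  have hp0 : p = 0 := by
    by_contra h
    have hne := hpfirst 0 (Nat.pos_of_ne_zero h)
    have habs := hstep 0 (by omega)
    have h1 : s 1 - s 0 = -1 := by
      rcases (abs_eq (by norm_num : (0:ℤ) ≤ 1)).mp habs with h1 | h1
      · exact absurd h1 hne
      · exact h1
    have := (hbound 1 (by omega)).1
    omega
  subst hp0
  have hq1 : 1 ≤ q := by
    rcases Nat.eq_zero_or_pos q with h | h
    · subst h; omega
    · exact h
  -- s j = j for j ≤ q
  have hsj : ∀ j ≤ q, s j = (j : ℤ) := by
    intro j hj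
    induction j with
    | zero => simpa using h0
    | succ k ih =>
      have habs := hstep k (by omega)
      have hne := hqfirst k (by omega)
      have h1 : s (k + 1) - s k = 1 := by
        rcases (abs_eq (by norm_num : (0:ℤ) ≤ 1)).mp habs with h1 | h1
        · exact h1
        · exact absurd h1 hne
      have := ih (by omega)
      push_cast
      omega
  have hsq1 : s (q + 1) = (q : ℤ) - 1 := by
    have := hsj q le_rfl
    omega
  simp only [Nat.min_eq_left (Nat.zero_le q), Nat.max_eq_right (Nat.zero_le q),
    Nat.not_lt_zero, if_false]
  have key : ∀ m, (∑ j ∈ Finset.range m,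
      (if j < q - 1 then s (j + 2) - s (j + 1)
       else s (j + 3) - s (j + 2))) = if m < q then (m : ℤ) else s (m + 2) := by
    intro m
    induction m with
    | zero => rw [Finset.sum_range_zero, if_pos (by omega : 0 < q)]; simp
    | succ m ih =>
      rw [Finset.sum_range_succ, ih]
      have e3 : m + 1 + 2 = m + 3 := by omega
      by_cases h1 : m + 1 < q
      · rw [if_pos (by omega : m < q - 1), if_pos (by omega : m < q), if_pos h1]
        have e1 := hsj (m + 1) (by omega)
        have e2 := hsj (m + 2) (by omega)
        push_cast at e1 e2 ⊢
        omega
      · rw [if_neg (by omega : ¬ (m < q - 1)), if_neg (by omega : ¬ (m + 1 < q)), e3]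
        by_cases h2 : m + 1 = q
        · rw [if_pos (by omega : m < q)]
          have e : m + 2 = q + 1 := by omega
          rw [e, hsq1]
          have : (m : ℤ) + 1 = (q : ℤ) := by exact_mod_cast congrArg (Nat.cast : ℕ → ℤ) h2
          omega
        · rw [if_neg (by omega : ¬ (m < q))]
          omega
  constructor
  · intro m hm
    rw [key]
    split_ifs with h
    · have hqL := (hbound q (by omega)).2
      rw [hsj q le_rfl] at hqL
      constructor
      · positivity
      · have : (m : ℤ) ≤ (q : ℤ) := by exact_mod_cast Nat.le_of_lt h
        omega
    · exact hbound (m + 2) (by omega)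
  · rw [key]
    split_ifs with h
    · -- then q = n - 1, and s n = q - 1 = 0 forces q = 1, n = 2, so n - 2 = 0
      have e : q + 1 = n := by omega
      rw [e] at hsq1
      have : (q : ℤ) = 1 := by omega
      have hq' : q = 1 := by exact_mod_cast this
      have : n - 2 = 0 := by omega
      rw [this]
      norm_num
    · have e : n - 2 + 2 = n := by omega
      rw [e, hend]
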